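/- Suppose L satisfies the entropy-information inequality EI(Φ) for a growth function Φ, that sup_{x∈X} M₁(x) < ∞, and that the state space X is infinite. Then Φ grows linearly at infinity: there exists a constant C > 0 such that Φ(r) ≥ C·r for all r > 0. -/

import Mathlib

open Real Filter MeasureTheory Set

/-- `M₁(x) = ∑_{y ≠ x} k(x,y)`. -/
noncomputable def M1fn {X : Type*} (k : X → X → ℝ) (x : X) : ℝ :=
  ∑' y : {y : X // y ≠ x}, k x y

/-- The standing assumptions on the transition rates and the invariant probability
measure: nonnegative off-diagonal rates, summable rows, `k(x,x) = -M₁(x)`,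
a strictly positive probability density and detailed balance. -/
def MarkovSetting {X : Type*} (k : X → X → ℝ) (μ : X → ℝ) : Prop :=
  (∀ x y, x ≠ y → 0 ≤ k x y) ∧
  (∀ x : X, Summable fun y : {y : X // y ≠ x} => k x y) ∧
  (∀ x : X, k x x = -M1fn k x) ∧
  (∀ x, 0 < μ x) ∧ (∑' x, μ x) = 1 ∧
  (∀ x y, μ x * k x y = μ y * k y x)

/-- The entropy `Ent_μ(f)`. -/
noncomputable def entFn {X : Type*} (μ f : X → ℝ) : ℝ :=
  (∑' x, f x * Real.log (f x) * μ x) -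
    (∑' x, f x * μ x) * Real.log (∑' x, f x * μ x)

/-- The Fisher information `I(f) = (1/2) ∑_{x,y} k(x,y)(f(y)-f(x))(log f(y)-log f(x)) μ(x)`. -/
noncomputable def fisherFn {X : Type*} (k : X → X → ℝ) (μ f : X → ℝ) : ℝ :=
  (1/2) * ∑' p : X × X,
    k p.1 p.2 * (f p.2 - f p.1) * (Real.log (f p.2) - Real.log (f p.1)) * μ p.1

/-- Finiteness of the Fisher information. -/
def FisherFinite {X : Type*} (k : X → X → ℝ) (μ f : X → ℝ) : Prop :=
  Summable fun p : X × X =>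
    k p.1 p.2 * (f p.2 - f p.1) * (Real.log (f p.2) - Real.log (f p.1)) * μ p.1

/-- A growth function: strictly increasing, concave, `C¹` and positive on `(0,∞)`. -/
def GrowthFun (Φ : ℝ → ℝ) : Prop :=
  StrictMonoOn Φ (Ioi 0) ∧ ConcaveOn ℝ (Ioi 0) Φ ∧
    ContDiffOn ℝ 1 Φ (Ioi 0) ∧ ∀ r : ℝ, 0 < r → 0 < Φ r

/-- The entropy-information inequality `EI(Φ)`:
`Ent_μ(f) ≤ Φ(I(f))` for all probability densities `f ∈ P_*(X)` with finite entropy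
and finite Fisher information. -/
def EIineq {X : Type*} (k : X → X → ℝ) (μ : X → ℝ) (Φ : ℝ → ℝ) : Prop :=
  ∀ f : X → ℝ, (∀ x, 0 < f x) → (∑' x, f x * μ x) = 1 →
    (Summable fun x => f x * Real.log (f x) * μ x) →
    FisherFinite k μ f →
    entFn μ f ≤ Φ (fisherFn k μ f)

set_option maxHeartbeats 1000000 in
lemma key_lemma {X : Type*} [Countable X] (k : X → X → ℝ) (μ : X → ℝ)
    (hMS : MarkovSetting k μ) (Φ : ℝ → ℝ) (hEI : EIineq k μ Φ)
    (x₀ : X) (hπ : μ x₀ ≤ 1/16) :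
    ∃ Iv : ℝ,
      (1/2) * Real.log ((2 * μ x₀)⁻¹) - Real.log 2 ≤ Φ Iv ∧
      (M1fn k x₀ = 0 → Iv = 0) ∧
      (0 < M1fn k x₀ → 0 < Iv) ∧
      Iv ≤ M1fn k x₀ * ((1/2) * (Real.log ((2 * μ x₀)⁻¹) + Real.log 2)) := by
  classical
  obtain ⟨hk, hsum, hdiag, hpos, htot, hdb⟩ := hMS
  have hπpos : 0 < μ x₀ := hpos x₀
  set π₀ := μ x₀ with hπ₀def
  set a : ℝ := (2*π₀)⁻¹ with hadef
  set b : ℝ := (2*(1-π₀))⁻¹ with hbdef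
  have h1π : (0:ℝ) < 1 - π₀ := by linarith
  have hapos : 0 < a := by rw [hadef]; positivity
  have hbpos : 0 < b := by rw [hbdef]; positivity
  have ha8 : 8 ≤ a := by
    have h1 : (2*π₀) ≤ 1/8 := by linarith
    have := inv_anti₀ (by linarith : (0:ℝ) < 2*π₀) h1
    rw [hadef]; norm_num at this ⊢; linarith
  have hb1 : b ≤ 1 := by
    rw [hbdef]
    exact inv_le_one_of_one_le₀ (by linarith)
  have hbhalf : (1:ℝ)/2 ≤ b := by
    have := inv_anti₀ (by linarith : (0:ℝ) < 2*(1-π₀)) (by linarith : 2*(1-π₀) ≤ 2)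
    rw [hbdef]; norm_num at this ⊢; linarith
  have hab : b < a := by linarith
  have haπ : a * π₀ = 1/2 := by rw [hadef]; field_simp
  have hbπ : b * (1 - π₀) = 1/2 := by rw [hbdef]; field_simp
  have hμsum : Summable μ := by
    by_contra h
    rw [tsum_eq_zero_of_not_summable h] at htot; norm_num at htot
  set f : X → ℝ := fun x => if x = x₀ then a else b with hfdef
  have hfpos : ∀ x, 0 < f x := by
    intro x; by_cases hx : x = x₀ <;> simp [hfdef, hx, hapos, hbpos]
  have hsingle : ∀ c : ℝ, Summable (fun x => if x = x₀ then c else 0) := by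
    intro c
    apply summable_of_ne_finset_zero (s := {x₀})
    intro x hx
    simp only [Finset.mem_singleton] at hx
    simp [hx]
  have htsingle : ∀ c : ℝ, ∑' x, (if x = x₀ then c else 0) = c := fun c => tsum_ite_eq x₀ (fun _ => c)
  -- normalization
  have hfm : ∀ x, f x * μ x = b * μ x + (if x = x₀ then (a-b) * π₀ else 0) := by
    intro x; by_cases hx : x = x₀
    · subst hx; simp [hfdef]; try ring
    · simp [hfdef, hx]
  have hfμsummable : Summable (fun x => f x * μ x) :=
    Summable.congr ((hμsum.mul_left b).add (hsingle _)) (fun x => (hfm x).symm)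
  have hnorm : ∑' x, f x * μ x = 1 := by
    calc ∑' x, f x * μ x = ∑' x, (b * μ x + if x = x₀ then (a-b)*π₀ else 0) := tsum_congr hfm
    _ = b * ∑' x, μ x + (a-b)*π₀ := by
        rw [Summable.tsum_add (hμsum.mul_left b) (hsingle _), tsum_mul_left, htsingle]
    _ = 1 := by rw [htot]; linear_combination haπ + hbπ
  -- entropy sum
  have hflog : ∀ x, f x * Real.log (f x) * μ x
      = (b*Real.log b) * μ x + (if x = x₀ then (a*Real.log a - b*Real.log b)*π₀ else 0) := by
    intro x; by_cases hx : x = x₀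
    · subst hx; simp [hfdef]; try ring
    · simp [hfdef, hx]; try ring
  have hS₁sum : Summable (fun x => f x * Real.log (f x) * μ x) :=
    Summable.congr ((hμsum.mul_left (b*Real.log b)).add (hsingle _)) (fun x => (hflog x).symm)
  have hS₁ : ∑' x, f x * Real.log (f x) * μ x
      = b*Real.log b + (a*Real.log a - b*Real.log b)*π₀ := by
    calc ∑' x, f x * Real.log (f x) * μ x
        = ∑' x, ((b*Real.log b) * μ x + if x = x₀ then (a*Real.log a - b*Real.log b)*π₀ else 0) :=
          tsum_congr hflog
    _ = (b*Real.log b) * ∑' x, μ x + (a*Real.log a - b*Real.log b)*π₀ := by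
        rw [Summable.tsum_add ((hμsum.mul_left _)) (hsingle _), tsum_mul_left, htsingle]
    _ = _ := by rw [htot]; ring
  -- Fisher
  set D : ℝ := (a - b) * (Real.log a - Real.log b) with hDdef
  have hlogab : Real.log b < Real.log a := Real.log_lt_log hbpos hab
  have hDpos : 0 < D := by
    rw [hDdef]; apply mul_pos <;> linarith
  set c₁ : X × X → ℝ := fun p => if p.1 = x₀ ∧ p.2 ≠ x₀ then D * (π₀ * k x₀ p.2) else 0 with hc₁def
  set c₂ : X × X → ℝ := fun p => if p.2 = x₀ ∧ p.1 ≠ x₀ then D * (π₀ * k x₀ p.1) else 0 with hc₂def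
  have hgc : ∀ p : X × X, k p.1 p.2 * (f p.2 - f p.1) * (Real.log (f p.2) - Real.log (f p.1)) * μ p.1
      = c₁ p + c₂ p := by
    rintro ⟨x, y⟩
    by_cases hx : x = x₀ <;> by_cases hy : y = x₀
    · subst hx; subst hy; simp [hc₁def, hc₂def, hfdef]
    · subst hx; simp [hc₁def, hc₂def, hfdef, hy, hDdef]; ring
    · rw [hy]
      simp [hc₁def, hc₂def, hfdef, hx, hDdef]
      linear_combination ((Real.log a - Real.log b) * (a - b)) * hdb x x₀
    · simp [hc₁def, hc₂def, hfdef, hx, hy]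
  have hsk : Summable (Set.indicator {y | y ≠ x₀} (k x₀)) :=
    summable_subtype_iff_indicator.mp (hsum x₀)
  have hslice : (fun y => c₁ (x₀, y)) = fun y => (D * π₀) * Set.indicator {y | y ≠ x₀} (k x₀) y := by
    funext y
    by_cases hy : y = x₀ <;> simp [hc₁def, hy, Set.indicator] <;> ring
  have hslice₂ : (fun y => c₂ (y, x₀)) = fun y => (D * π₀) * Set.indicator {y | y ≠ x₀} (k x₀) y := by
    funext y
    by_cases hy : y = x₀ <;> simp [hc₂def, hy, Set.indicator] <;> ring
  have hM1ind : M1fn k x₀ = ∑' y, Set.indicator {y | y ≠ x₀} (k x₀) y := tsum_subtype _ _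
  have hinj₁ : Function.Injective (fun y : X => ((x₀, y) : X × X)) := by
    intro u v h; exact congrArg Prod.snd h
  have hinj₂ : Function.Injective (fun y : X => ((y, x₀) : X × X)) := by
    intro u v h; exact congrArg Prod.fst h
  have hsupp₁ : Function.support c₁ ⊆ Set.range (fun y : X => ((x₀, y) : X × X)) := by
    rintro ⟨x, y⟩ hp
    by_contra hr
    apply hp
    have hx : x ≠ x₀ := by
      intro h; exact hr ⟨y, by simp [h]⟩
    simp [hc₁def, hx]
  have hsupp₂ : Function.support c₂ ⊆ Set.range (fun y : X => ((y, x₀) : X × X)) := by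
    rintro ⟨x, y⟩ hp
    by_contra hr
    apply hp
    have hy : y ≠ x₀ := by
      intro h; exact hr ⟨x, by simp [h]⟩
    simp [hc₂def, hy]
  have hvan₁ : ∀ p ∉ Set.range (fun y : X => ((x₀, y) : X × X)), c₁ p = 0 :=
    fun p hp => Function.notMem_support.mp (fun hs => hp (hsupp₁ hs))
  have hvan₂ : ∀ p ∉ Set.range (fun y : X => ((y, x₀) : X × X)), c₂ p = 0 :=
    fun p hp => Function.notMem_support.mp (fun hs => hp (hsupp₂ hs))
  have hc₁sum : Summable c₁ := by
    rw [← hinj₁.summable_iff hvan₁]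
    exact Summable.congr (hsk.mul_left (D*π₀)) (fun y => (congrFun hslice y).symm)
  have hc₂sum : Summable c₂ := by
    rw [← hinj₂.summable_iff hvan₂]
    exact Summable.congr (hsk.mul_left (D*π₀)) (fun y => (congrFun hslice₂ y).symm)
  have htc₁ : ∑' p, c₁ p = D * π₀ * M1fn k x₀ := by
    rw [← hinj₁.tsum_eq hsupp₁]
    calc ∑' y, c₁ (x₀, y) = ∑' y, (D * π₀) * Set.indicator {y | y ≠ x₀} (k x₀) y := by
          exact tsum_congr (fun y => congrFun hslice y)
    _ = (D * π₀) * ∑' y, Set.indicator {y | y ≠ x₀} (k x₀) y := tsum_mul_left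
    _ = D * π₀ * M1fn k x₀ := by rw [← hM1ind]
  have htc₂ : ∑' p, c₂ p = D * π₀ * M1fn k x₀ := by
    rw [← hinj₂.tsum_eq hsupp₂]
    calc ∑' y, c₂ (y, x₀) = ∑' y, (D * π₀) * Set.indicator {y | y ≠ x₀} (k x₀) y := by
          exact tsum_congr (fun y => congrFun hslice₂ y)
    _ = (D * π₀) * ∑' y, Set.indicator {y | y ≠ x₀} (k x₀) y := tsum_mul_left
    _ = D * π₀ * M1fn k x₀ := by rw [← hM1ind]
  have hFF : FisherFinite k μ f :=
    Summable.congr (hc₁sum.add hc₂sum) (fun p => (hgc p).symm)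
  have hFval : fisherFn k μ f = M1fn k x₀ * (π₀ * D) := by
    unfold fisherFn
    rw [tsum_congr hgc, Summable.tsum_add hc₁sum hc₂sum, htc₁, htc₂]; ring
  -- EI
  have hEnt := hEI f hfpos hnorm hS₁sum hFF
  unfold entFn at hEnt
  rw [hnorm, hS₁] at hEnt
  simp only [Real.log_one, mul_zero, one_mul, sub_zero] at hEnt
  -- log bounds
  have hloga : 0 < Real.log a := Real.log_pos (by linarith)
  have hlogble : Real.log b ≤ 0 := Real.log_nonpos hbpos.le hb1
  have hlogbge : -Real.log 2 ≤ Real.log b := by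
    have h := Real.log_le_log (by norm_num : (0:ℝ) < 1/2) hbhalf
    rw [show (1:ℝ)/2 = 2⁻¹ by norm_num, Real.log_inv] at h
    exact h
  have hblogb : Real.log b ≤ b * Real.log b := by nlinarith
  have hM1nn : 0 ≤ M1fn k x₀ := tsum_nonneg (fun y => hk x₀ y (Ne.symm y.2))
  refine ⟨fisherFn k μ f, ?_, ?_, ?_, ?_⟩
  · -- entropy lower bound
    refine le_trans ?_ hEnt
    have hrw : b*Real.log b + (a*Real.log a - b*Real.log b)*π₀
        = (1-π₀)*(b*Real.log b) + (1/2)*Real.log a := by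
      linear_combination (Real.log a) * haπ
    rw [hrw]
    have h1 : b * Real.log b ≤ 0 := mul_nonpos_of_nonneg_of_nonpos hbpos.le hlogble
    nlinarith
  · intro h0; rw [hFval, h0, zero_mul]
  · intro hM; rw [hFval]; positivity
  · rw [hFval]
    have hDb : D ≤ a * (Real.log a + Real.log 2) := by
      rw [hDdef]
      apply mul_le_mul (by linarith) (by linarith) (by linarith) hapos.le
    have hπD : π₀ * D ≤ (1/2) * (Real.log a + Real.log 2) := by
      have := mul_le_mul_of_nonneg_left hDb hπpos.le
      calc π₀ * D ≤ π₀ * (a * (Real.log a + Real.log 2)) := this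
      _ = (1/2) * (Real.log a + Real.log 2) := by
          linear_combination (Real.log a + Real.log 2) * haπ
    exact mul_le_mul_of_nonneg_left hπD hM1nn

lemma conc_lin {Φ : ℝ → ℝ} (hconc : ConcaveOn ℝ (Ioi 0) Φ)
    (hpos : ∀ s : ℝ, 0 < s → 0 < Φ s) {c r R : ℝ} (hc : 0 ≤ c)
    (hr : 0 < r) (hrR : r ≤ R) (hΦR : c * R ≤ Φ R) : (c/2) * r ≤ Φ r := by
  have hε : (0:ℝ) < r/2 := by linarith
  have hR : 0 < R := lt_of_lt_of_le hr hrR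
  have hden : 0 < R - r/2 := by linarith
  set l₁ : ℝ := (R - r)/(R - r/2) with hl₁def
  set l₂ : ℝ := (r - r/2)/(R - r/2) with hl₂def
  have hl₁ : 0 ≤ l₁ := div_nonneg (by linarith) hden.le
  have hl₂ : 0 ≤ l₂ := div_nonneg (by linarith) hden.le
  have hsum : l₁ + l₂ = 1 := by
    rw [hl₁def, hl₂def, ← add_div, div_eq_one_iff_eq hden.ne']; ring
  have hcomb : l₁ * (r/2) + l₂ * R = r := by
    rw [hl₁def, hl₂def, div_mul_eq_mul_div, div_mul_eq_mul_div, ← add_div,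
      div_eq_iff hden.ne']; ring
  have h := hconc.2 (mem_Ioi.mpr hε) (mem_Ioi.mpr hR) hl₁ hl₂ hsum
  simp only [smul_eq_mul] at h
  rw [hcomb] at h
  have h1 : 0 ≤ l₁ * Φ (r/2) := mul_nonneg hl₁ (hpos _ hε).le
  have h2 : l₂ * (c*R) ≤ l₂ * Φ R := mul_le_mul_of_nonneg_left hΦR hl₂
  have h3 : (c/2)*r ≤ l₂ * (c*R) := by
    have hle : (r/2)/R ≤ l₂ := by
      rw [hl₂def]
      have : r - r/2 = r/2 := by ring
      rw [this]
      exact div_le_div_of_nonneg_left hε.le hden (by linarith)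
    have := mul_le_mul_of_nonneg_right hle (mul_nonneg hc hR.le)
    calc (c/2)*r = (r/2)/R * (c*R) := by field_simp
    _ ≤ l₂ * (c*R) := this
  linarith


/-- If `L` satisfies `EI(Φ)` with growth function `Φ`, `sup_x M₁(x) < ∞` and the state
space is infinite, then `Φ` grows (at least) linearly. -/
theorem stmt_3 {X : Type*} [Countable X] (hX : Infinite X)
    (k : X → X → ℝ) (μ : X → ℝ)
    (hMS : MarkovSetting k μ) (Φ : ℝ → ℝ) (hΦ : GrowthFun Φ)
    (hEI : EIineq k μ Φ) (hM1 : ∃ C : ℝ, ∀ x : X, M1fn k x ≤ C) :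
    ∃ C : ℝ, 0 < C ∧ ∀ r : ℝ, 0 < r → C * r ≤ Φ r := by
  obtain ⟨C₀, hC₀⟩ := hM1
  obtain ⟨hk, hsum, hdiag, hpos, htot, hdb⟩ := id hMS
  set C' : ℝ := max C₀ 1 with hC'def
  have hC'pos : (0:ℝ) < C' := lt_of_lt_of_le one_pos (le_max_right _ _)
  have hC' : ∀ x, M1fn k x ≤ C' := fun x => le_trans (hC₀ x) (le_max_left _ _)
  have hM1nn : ∀ x, 0 ≤ M1fn k x := fun x => tsum_nonneg (fun y => hk x y (Ne.symm y.2))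
  have hμsum : Summable μ := by
    by_contra h
    rw [tsum_eq_zero_of_not_summable h] at htot; norm_num at htot
  haveI : Infinite X := hX
  have hsmall : ∀ ε : ℝ, 0 < ε → ∃ x, μ x < ε := by
    intro ε hε
    have h := hμsum.tendsto_cofinite_zero
    have h2 : ∀ᶠ x in Filter.cofinite, μ x < ε := h.eventually_lt_const hε
    exact h2.exists
  have hlog2 : 0 < Real.log 2 := Real.log_pos (by norm_num)
  -- lower bound on log((2μx)⁻¹) from μ x small
  have hlogbig : ∀ (x : X) (t : ℝ), μ x ≤ (1/2) * Real.exp (-t) → t ≤ Real.log ((2 * μ x)⁻¹) := by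
    intro x t hx
    have hμx : 0 < μ x := hpos x
    have h1 : 2 * μ x ≤ Real.exp (-t) := by linarith
    have h2 : Real.exp t ≤ (2 * μ x)⁻¹ := by
      rw [show Real.exp t = (Real.exp (-t))⁻¹ by rw [Real.exp_neg, inv_inv]]
      exact inv_anti₀ (by linarith) h1
    calc t = Real.log (Real.exp t) := (Real.log_exp t).symm
    _ ≤ Real.log ((2 * μ x)⁻¹) := Real.log_le_log (Real.exp_pos t) h2
  by_cases hc : ∀ ε : ℝ, 0 < ε → ∃ x, μ x < ε ∧ 0 < M1fn k x
  · -- main case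
    refine ⟨1/(8*C'), by positivity, fun r hr => ?_⟩
    obtain ⟨x₀, hx₀, hM₁pos⟩ :=
      hc (min (1/16) ((1/2) * Real.exp (-(2*r/C')))) (by positivity)
    have hx₀16 : μ x₀ ≤ 1/16 := le_of_lt (lt_of_lt_of_le hx₀ (min_le_left _ _))
    have hx₀exp : μ x₀ ≤ (1/2) * Real.exp (-(2*r/C')) :=
      le_of_lt (lt_of_lt_of_le hx₀ (min_le_right _ _))
    obtain ⟨Iv, hEnt, _, hIvpos, hIvle⟩ := key_lemma k μ hMS Φ hEI x₀ hx₀16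
    set L : ℝ := Real.log ((2 * μ x₀)⁻¹) with hLdef
    have hL2 : 3 * Real.log 2 ≤ L := by
      have h8 : (8:ℝ) ≤ (2 * μ x₀)⁻¹ := by
        have h1 : 2 * μ x₀ ≤ 1/8 := by linarith
        calc (8:ℝ) = (1/8 : ℝ)⁻¹ := by norm_num
        _ ≤ (2 * μ x₀)⁻¹ := inv_anti₀ (by linarith [hpos x₀]) h1
      have := Real.log_le_log (by norm_num : (0:ℝ) < 8) h8
      rw [show (8:ℝ) = 2^3 by norm_num, Real.log_pow] at this
      push_cast at this
      linarith
    have hLr : 2*r/C' ≤ L := hlogbig x₀ _ hx₀exp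
    set R : ℝ := C' * ((1/2) * (L + Real.log 2)) with hRdef
    have hRpos : 0 < R := by
      have : 0 < L := by linarith
      rw [hRdef]; positivity
    have hIvR : Iv ≤ R := by
      calc Iv ≤ M1fn k x₀ * ((1/2) * (L + Real.log 2)) := hIvle
      _ ≤ C' * ((1/2) * (L + Real.log 2)) := by
          apply mul_le_mul_of_nonneg_right (hC' x₀)
          have : 0 < L := by linarith
          positivity
    have hΦIR : Φ Iv ≤ Φ R := by
      rcases eq_or_lt_of_le hIvR with h | h
      · rw [h]
      · exact le_of_lt (hΦ.1 (mem_Ioi.mpr (hIvpos hM₁pos)) (mem_Ioi.mpr hRpos) h)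
    have hΦR : (1/(4*C')) * R ≤ Φ R := by
      have h1 : (1/(4*C')) * R = (1/8) * (L + Real.log 2) := by
        rw [hRdef]; field_simp; ring
      rw [h1]
      have h2 : (1/8) * (L + Real.log 2) ≤ (1/2) * L - Real.log 2 := by linarith
      linarith [le_trans hEnt hΦIR]
    have hrR : r ≤ R := by
      have : C'/2 * (2*r/C') ≤ C'/2 * L := by
        apply mul_le_mul_of_nonneg_left hLr (by positivity)
      have heq : C'/2 * (2*r/C') = r := by field_simp
      rw [hRdef]
      nlinarith [hlog2]
    have := conc_lin hΦ.2.1 hΦ.2.2.2 (by positivity : (0:ℝ) ≤ 1/(4*C')) hr hrR hΦR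
    calc (1/(8*C')) * r = ((1/(4*C'))/2) * r := by ring
    _ ≤ Φ r := this
  · -- degenerate case : derive False
    push_neg at hc
    obtain ⟨ε, hε, hεM⟩ := hc
    exfalso
    set t : ℝ := 2 * (Φ 0 + Real.log 2 + 1) with htdef
    obtain ⟨x₀, hx₀⟩ := hsmall (min ε (min (1/16) ((1/2) * Real.exp (-t))))
      (by positivity)
    have hx₀ε : μ x₀ < ε := lt_of_lt_of_le hx₀ (min_le_left _ _)
    have hx₀16 : μ x₀ ≤ 1/16 :=
      le_of_lt (lt_of_lt_of_le hx₀ (le_trans (min_le_right _ _) (min_le_left _ _)))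
    have hx₀exp : μ x₀ ≤ (1/2) * Real.exp (-t) :=
      le_of_lt (lt_of_lt_of_le hx₀ (le_trans (min_le_right _ _) (min_le_right _ _)))
    have hM0 : M1fn k x₀ = 0 := le_antisymm (hεM x₀ hx₀ε) (hM1nn x₀)
    obtain ⟨Iv, hEnt, hIv0, _, _⟩ := key_lemma k μ hMS Φ hEI x₀ hx₀16
    rw [hIv0 hM0] at hEnt
    have hL : t ≤ Real.log ((2 * μ x₀)⁻¹) := hlogbig x₀ t hx₀exp
    rw [htdef] at hL
    linarith
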